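/- Let k be an algebraically closed field of characteristic zero and S := k[X₀,X₁,X₂]. Let F(t) = F₀ + t·H(t) ∈ S[[t]] be homogeneous of positive degree with F₀ ≠ 0, let F₀ = ∏ᵢ Eᵢ^{eᵢ} be its factorization into distinct irreducibles, set Dⱼ := ∂ⱼ(F₀)/∏ᵢ Eᵢ^{eᵢ−1}, and let ∂(0) := det[(D₀,D₁,D₂); ∇H(0); ∇] be the reduced F(t)-derivation evaluated at t = 0. If gcd(F₀, H(0)) = 1, then gcd(∂(0), F₀) = 1. -/

import Mathlib

open MvPolynomial

noncomputable section

/-- The derivation `det[(a₀,a₁,a₂);(b₀,b₁,b₂);∇]` on `k[X₀,X₁,X₂]`. -/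
def detDer {R : Type*} [CommRing R] (a b : Fin 3 → MvPolynomial (Fin 3) R) :
    Derivation R (MvPolynomial (Fin 3) R) (MvPolynomial (Fin 3) R) :=
  MvPolynomial.mkDerivation R
    ![a 1 * b 2 - a 2 * b 1, -(a 0 * b 2 - a 2 * b 0), a 0 * b 1 - a 1 * b 0]

/-- `gcd(∂, F) = 1` for a derivation with coefficient tuple `G`: every common factor of `F`
and the three minors `Xᵢ·G_j − X_j·Gᵢ` (`i < j`) is a unit. -/
def coeffsPrimeTo {R : Type*} [CommRing R] (G : Fin 3 → MvPolynomial (Fin 3) R)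
    (F : MvPolynomial (Fin 3) R) : Prop :=
  ∀ z : MvPolynomial (Fin 3) R, z ∣ F →
    (∀ i j : Fin 3, i < j → z ∣ (X i * G j - X j * G i)) → IsUnit z

lemma coeff_pderiv' {σ : Type*} [DecidableEq σ] {R : Type*} [CommSemiring R] (i : σ)
    (f : MvPolynomial σ R) (w : σ →₀ ℕ) :
    coeff w (pderiv i f) = ((w i + 1 : ℕ) : R) * coeff (w + Finsupp.single i 1) f := by
  induction f using MvPolynomial.induction_on' with
  | add p q hp hq => simp [hp, hq, mul_add]
  | monomial s a =>
    rw [pderiv_monomial, coeff_monomial, coeff_monomial]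
    by_cases h : s = w + Finsupp.single i 1
    · subst h
      rw [if_pos (add_tsub_cancel_right ..), if_pos rfl]
      rw [Finsupp.add_apply, Finsupp.single_eq_same]
      push_cast
      ring
    · rw [if_neg h, mul_zero]
      by_cases h2 : s - Finsupp.single i 1 = w
      · by_cases h3 : s i = 0
        · rw [if_pos h2, h3]; simp
        · exfalso
          apply h
          rw [← h2, tsub_add_cancel_of_le]
          exact Finsupp.single_le_iff.mpr (Nat.one_le_iff_ne_zero.mpr h3)
      · rw [if_neg h2]

lemma euler' {k : Type*} [CommSemiring k] {n : ℕ} {φ : MvPolynomial (Fin 3) k}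
    (hφ : φ.IsHomogeneous n) :
    ∑ l : Fin 3, X l * pderiv l φ = C (n : k) * φ := by
  ext m
  rw [coeff_sum, coeff_C_mul]
  have hterm : ∀ l : Fin 3, coeff m (X l * pderiv l φ) = ((m l : ℕ) : k) * coeff m φ := by
    intro l
    rw [mul_comm, coeff_mul_X']
    by_cases hl : l ∈ m.support
    · rw [if_pos hl, coeff_pderiv']
      have hne : m l ≠ 0 := Finsupp.mem_support_iff.mp hl
      have h1 : ((m - Finsupp.single l 1 : Fin 3 →₀ ℕ)) l + 1 = m l := by
        rw [Finsupp.tsub_apply, Finsupp.single_eq_same]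
        exact Nat.succ_pred_eq_of_pos (Nat.pos_of_ne_zero hne)
      have h2 : m - Finsupp.single l 1 + Finsupp.single l 1 = m :=
        tsub_add_cancel_of_le (Finsupp.single_le_iff.mpr (Nat.one_le_iff_ne_zero.mpr hne))
      rw [h1, h2]
    · rw [if_neg hl, Finsupp.notMem_support_iff.mp hl]
      simp
  rw [Finset.sum_congr rfl fun l _ => hterm l, ← Finset.sum_mul, ← Nat.cast_sum]
  by_cases hc : coeff m φ = 0
  · rw [hc, mul_zero, mul_zero]
  · have hdn : m.degree = n := by
      by_contra hne; exact hc (hφ.coeff_eq_zero hne)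
    congr 2
    rw [← hdn, Finsupp.degree]
    exact (Finset.sum_subset (Finset.subset_univ _)
      (fun x _ hx => Finsupp.notMem_support_iff.mp hx)).symm

lemma pderiv_eq_zero_of_dvd {k : Type*} [Field k] {P : MvPolynomial (Fin 3) k}
    (hP : P ≠ 0) (l : Fin 3) (h : P ∣ pderiv l P) : pderiv l P = 0 := by
  by_contra hg
  obtain ⟨c, hc⟩ := h
  have hc0 : c ≠ 0 := by rintro rfl; exact hg (by rw [hc, mul_zero])
  set D : (Fin 3 →₀ ℕ) → Lex (Fin 3 →₀ ℕ) := ⇑(toLex (α := Fin 3 →₀ ℕ)) with hDdef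
  have hD : Function.Injective D := toLex.injective
  have hadd : ∀ a b : Fin 3 →₀ ℕ, D (a + b) = D a + D b := fun _ _ => rfl
  have key1 : AddMonoidAlgebra.supDegree D (P * c) =
      AddMonoidAlgebra.supDegree D P + AddMonoidAlgebra.supDegree D c := by
    refine AddMonoidAlgebra.supDegree_mul hD hadd ?_ hP hc0
    exact mul_ne_zero ((AddMonoidAlgebra.leadingCoeff_ne_zero hD).mpr hP)
      ((AddMonoidAlgebra.leadingCoeff_ne_zero hD).mpr hc0)
  have h0x : ∀ x : Lex (Fin 3 →₀ ℕ), (0 : Lex (Fin 3 →₀ ℕ)) ≤ x := fun x =>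
    Finsupp.toLex_monotone (show (0 : Fin 3 →₀ ℕ) ≤ ofLex x from zero_le)
  have key2 : AddMonoidAlgebra.supDegree D P ≤ AddMonoidAlgebra.supDegree D (P * c) := by
    rw [key1]
    exact le_add_of_nonneg_right (h0x _)
  have key3 : AddMonoidAlgebra.supDegree D (pderiv l P) < AddMonoidAlgebra.supDegree D P := by
    obtain ⟨a, ha, he⟩ := AddMonoidAlgebra.exists_supDegree_mem_support D hg
    rw [he]
    have hco : coeff a (pderiv l P) ≠ 0 := Finsupp.mem_support_iff.mp ha
    have hmem : a + Finsupp.single l 1 ∈ P.support := by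
      rw [MvPolynomial.mem_support_iff]
      intro h0
      rw [coeff_pderiv', h0, mul_zero] at hco
      exact hco rfl
    have hlt : D a < D (a + Finsupp.single l 1) := by
      refine lt_of_le_of_ne (Finsupp.toLex_monotone le_self_add) fun heq => ?_
      have := hD heq
      simp only [left_eq_add] at this
      exact one_ne_zero (Finsupp.single_eq_zero.mp this)
    exact hlt.trans_le (Finset.le_sup hmem)
  rw [hc] at key3
  exact absurd key2 (not_le.mpr key3)

lemma eq_C_of_pderiv_eq_zero' {k : Type*} [Field k] [CharZero k] {P : MvPolynomial (Fin 3) k}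
    (h : ∀ l, pderiv l P = 0) : P = C (coeff 0 P) := by
  ext v
  rw [coeff_C]
  by_cases hv : (0 : Fin 3 →₀ ℕ) = v
  · rw [if_pos hv, ← hv]
  · rw [if_neg hv]
    obtain ⟨l, hl⟩ : ∃ l, v l ≠ 0 := by
      by_contra hall
      push_neg at hall
      apply hv
      ext a
      exact (hall a).symm
    have h2 : v - Finsupp.single l 1 + Finsupp.single l 1 = v :=
      tsub_add_cancel_of_le (Finsupp.single_le_iff.mpr (Nat.one_le_iff_ne_zero.mpr hl))
    have := coeff_pderiv' l P (v - Finsupp.single l 1)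
    rw [h l, h2] at this
    have hcast : ((((v - Finsupp.single l 1 : Fin 3 →₀ ℕ)) l + 1 : ℕ) : k) ≠ 0 :=
      Nat.cast_ne_zero.mpr (Nat.succ_ne_zero _)
    have h0 : ((((v - Finsupp.single l 1 : Fin 3 →₀ ℕ)) l + 1 : ℕ) : k) * coeff v P = 0 := by
      rw [← this]; simp
    exact (mul_eq_zero.mp h0).resolve_left hcast

/-- Let `k` be an algebraically closed field of characteristic zero and
`S := k[X₀,X₁,X₂]`.  Let `F(t) = F₀ + t·H(t) ∈ S[[t]]` be homogeneous of positive degree with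
`F₀ ≠ 0`, factorization `F₀ = ∏ᵢ Eᵢ^{eᵢ}` into distinct irreducibles, and
`Dⱼ := ∂ⱼ(F₀)/∏ᵢ Eᵢ^{eᵢ−1}`.  If `gcd(F₀, H(0)) = 1`, then, with
`∂(0) := det[(D₀,D₁,D₂); ∇H(0); ∇]` the reduced `F(t)`-derivation at `t = 0`,
`gcd(∂(0), F₀) = 1`. -/
theorem reduced_derivation_primeTo {k : Type*} [Field k] [IsAlgClosed k] [CharZero k]
    (F₀ : MvPolynomial (Fin 3) k) (H : PowerSeries (MvPolynomial (Fin 3) k))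
    (d : ℕ) (hd : 0 < d)
    (hFhom : ∀ n, (PowerSeries.coeff n
      (PowerSeries.C F₀ + PowerSeries.X * H)).IsHomogeneous d)
    (hF₀ : F₀ ≠ 0)
    (m : ℕ) (E : Fin m → MvPolynomial (Fin 3) k) (e : Fin m → ℕ)
    (hirr : ∀ i, Irreducible (E i)) (hpos : ∀ i, 0 < e i)
    (hdist : ∀ i j, i ≠ j → ¬ Associated (E i) (E j))
    (hfact : F₀ = ∏ i, E i ^ e i)
    (D : Fin 3 → MvPolynomial (Fin 3) k)
    (hD : ∀ j : Fin 3, pderiv j F₀ = (∏ i, E i ^ (e i - 1)) * D j)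
    (hcop : IsRelPrime F₀ (PowerSeries.coeff 0 H)) :
    coeffsPrimeTo
      (fun j => detDer D (fun l => pderiv l (PowerSeries.coeff 0 H)) (X j)) F₀ := by
  classical
  intro z hzF hzminors
  by_contra hu
  set h : MvPolynomial (Fin 3) k := PowerSeries.coeff 0 H with hh
  -- homogeneity
  have hF0hom : F₀.IsHomogeneous d := by have := hFhom 0; simpa using this
  have hhhom : h.IsHomogeneous d := by
    have := hFhom 1
    rw [hh, PowerSeries.coeff_zero_eq_constantCoeff]
    simpa [PowerSeries.coeff_succ_X_mul 0 H] using this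
  -- irreducible factor q of z
  have hz0 : z ≠ 0 := by
    rintro rfl
    exact hF₀ (zero_dvd_iff.mp hzF)
  obtain ⟨q, hqirr, hqz⟩ := WfDvdMonoid.exists_irreducible_factor hu hz0
  have hqprime : Prime q := UniqueFactorizationMonoid.irreducible_iff_prime.mp hqirr
  have hqF : q ∣ F₀ := hqz.trans hzF
  obtain ⟨i₀, -, hqEpow⟩ := hqprime.exists_mem_finset_dvd (hfact ▸ hqF)
  have hqE : q ∣ E i₀ := hqprime.dvd_of_dvd_pow hqEpow
  have hassoc : Associated q (E i₀) := hqirr.associated_of_dvd (hirr i₀) hqE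
  have hPprime : Prime (E i₀) := UniqueFactorizationMonoid.irreducible_iff_prime.mp (hirr i₀)
  have hP0 : E i₀ ≠ 0 := hPprime.ne_zero
  -- value of the derivation coefficients
  have hGv : ∀ j : Fin 3, detDer D (fun l => pderiv l h) (X j) =
      ![D 1 * pderiv 2 h - D 2 * pderiv 1 h,
        -(D 0 * pderiv 2 h - D 2 * pderiv 0 h),
        D 0 * pderiv 1 h - D 1 * pderiv 0 h] j := fun j => MvPolynomial.mkDerivation_X _ _ _
  -- Euler for h
  have hS : X 0 * pderiv 0 h + X 1 * pderiv 1 h + X 2 * pderiv 2 h = C (d : k) * h := by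
    have := euler' hhhom; rwa [Fin.sum_univ_three] at this
  -- Euler for F₀ and computation of T
  have hprodne : (∏ i, E i ^ (e i - 1)) ≠ 0 :=
    Finset.prod_ne_zero_iff.mpr fun i _ => pow_ne_zero _ (hirr i).ne_zero
  have hsplit : (∏ i, E i ^ e i) = (∏ i, E i ^ (e i - 1)) * ∏ i, E i := by
    rw [← Finset.prod_mul_distrib]
    exact Finset.prod_congr rfl fun i _ => by rw [← pow_succ, Nat.sub_add_cancel (hpos i)]
  have hTmul : (∏ i, E i ^ (e i - 1)) * (X 0 * D 0 + X 1 * D 1 + X 2 * D 2)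
      = C (d : k) * F₀ := by
    have e1 : (∏ i, E i ^ (e i - 1)) * (X 0 * D 0 + X 1 * D 1 + X 2 * D 2)
        = X 0 * ((∏ i, E i ^ (e i - 1)) * D 0) + X 1 * ((∏ i, E i ^ (e i - 1)) * D 1)
          + X 2 * ((∏ i, E i ^ (e i - 1)) * D 2) := by ring
    rw [e1, ← hD 0, ← hD 1, ← hD 2]
    have := euler' hF0hom
    rwa [Fin.sum_univ_three] at this
  have hT : X 0 * D 0 + X 1 * D 1 + X 2 * D 2 = C (d : k) * ∏ i, E i := by
    apply mul_left_cancel₀ hprodne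
    rw [hTmul, hfact, hsplit]; ring
  -- the three minors give divisibility of the key combinations
  have m01 := hzminors 0 1 (by decide)
  have m02 := hzminors 0 2 (by decide)
  have m12 := hzminors 1 2 (by decide)
  simp only [hGv, Matrix.cons_val_zero, Matrix.cons_val_one, Matrix.head_cons,
    Matrix.cons_val_two, Matrix.tail_cons] at m01 m02 m12
  have key : ∀ l : Fin 3, q ∣ D l * (C (d : k) * h) - pderiv l h * (C (d : k) * ∏ i, E i) := by
    have e0 : X 1 * (D 0 * pderiv 1 h - D 1 * pderiv 0 h)
        - X 2 * (-(D 0 * pderiv 2 h - D 2 * pderiv 0 h))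
        = D 0 * (X 0 * pderiv 0 h + X 1 * pderiv 1 h + X 2 * pderiv 2 h)
          - pderiv 0 h * (X 0 * D 0 + X 1 * D 1 + X 2 * D 2) := by ring
    have e1 : X 0 * (D 0 * pderiv 1 h - D 1 * pderiv 0 h)
        - X 2 * (D 1 * pderiv 2 h - D 2 * pderiv 1 h)
        = -(D 1 * (X 0 * pderiv 0 h + X 1 * pderiv 1 h + X 2 * pderiv 2 h)
          - pderiv 1 h * (X 0 * D 0 + X 1 * D 1 + X 2 * D 2)) := by ring
    have e2 : X 0 * (-(D 0 * pderiv 2 h - D 2 * pderiv 0 h))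
        - X 1 * (D 1 * pderiv 2 h - D 2 * pderiv 1 h)
        = D 2 * (X 0 * pderiv 0 h + X 1 * pderiv 1 h + X 2 * pderiv 2 h)
          - pderiv 2 h * (X 0 * D 0 + X 1 * D 1 + X 2 * D 2) := by ring
    rw [hS, hT] at e0 e1 e2
    intro l
    fin_cases l
    · exact e0 ▸ (hqz.trans m12)
    · exact dvd_neg.mp (e1 ▸ (hqz.trans m02))
    · exact e2 ▸ (hqz.trans m01)
  -- q divides D l for every l
  have hdne : (d : k) ≠ 0 := Nat.cast_ne_zero.mpr hd.ne'
  have hCd : IsUnit (C (d : k) : MvPolynomial (Fin 3) k) :=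
    (isUnit_iff_ne_zero.mpr hdne).map (C : k →+* MvPolynomial (Fin 3) k)
  have hqh : ¬ q ∣ h := fun hdvd => hqirr.not_isUnit (hcop hqF hdvd)
  have hqT : q ∣ C (d : k) * ∏ i, E i :=
    Dvd.dvd.mul_left (hqE.trans (Finset.dvd_prod_of_mem E (Finset.mem_univ i₀))) _
  have hqD : ∀ l : Fin 3, q ∣ D l := by
    intro l
    have h1 : q ∣ D l * (C (d : k) * h) := by
      have := dvd_add (key l) (Dvd.dvd.mul_left hqT (pderiv l h))
      rwa [sub_add_cancel] at this
    rcases hqprime.dvd_or_dvd h1 with h2 | h2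
    · exact h2
    rcases hqprime.dvd_or_dvd h2 with h3 | h3
    · exact absurd (isUnit_of_dvd_unit h3 hCd) hqirr.not_isUnit
    · exact absurd h3 hqh
  -- transfer to P := E i₀
  have hPD : ∀ l : Fin 3, E i₀ ∣ D l := fun l => (hassoc.dvd_iff_dvd_left).mp (hqD l)
  set a : ℕ := e i₀ with ha
  set Q : MvPolynomial (Fin 3) k := ∏ j ∈ Finset.univ.erase i₀, E j ^ e j with hQ
  set Q' : MvPolynomial (Fin 3) k := ∏ j ∈ Finset.univ.erase i₀, E j ^ (e j - 1) with hQ'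
  have hFPQ : F₀ = E i₀ ^ a * Q := by
    rw [hfact, hQ, ← Finset.mul_prod_erase _ _ (Finset.mem_univ i₀)]
  have hEE : (∏ i, E i ^ (e i - 1)) = E i₀ ^ (a - 1) * Q' := by
    rw [hQ', ← Finset.mul_prod_erase _ _ (Finset.mem_univ i₀)]
  have hpowsucc : E i₀ ^ (a - 1) * E i₀ = E i₀ ^ a := by
    rw [← pow_succ, Nat.sub_add_cancel (hpos i₀)]
  have hPa_dvd : ∀ l : Fin 3, E i₀ ^ a ∣ pderiv l F₀ := by
    intro l
    obtain ⟨D', hD'⟩ := hPD l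
    rw [hD l, hEE, hD']
    exact ⟨Q' * D', by rw [← hpowsucc]; ring⟩
  have hPnotQ : ¬ E i₀ ∣ Q := by
    intro hdvd
    obtain ⟨j, hjmem, hj⟩ := hPprime.exists_mem_finset_dvd hdvd
    have hij : j ≠ i₀ := Finset.ne_of_mem_erase hjmem
    exact hdist i₀ j (Ne.symm hij)
      ((hirr i₀).associated_of_dvd (hirr j) (hPprime.dvd_of_dvd_pow hj))
  have hPdP : ∀ l : Fin 3, E i₀ ∣ pderiv l (E i₀) := by
    intro l
    have hder : pderiv l F₀
        = ((a : MvPolynomial (Fin 3) k) * E i₀ ^ (a - 1) * pderiv l (E i₀)) * Q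
          + E i₀ ^ a * pderiv l Q := by
      rw [hFPQ, pderiv_mul, pderiv_pow]
    have h1 : E i₀ ^ a ∣ ((a : MvPolynomial (Fin 3) k) * E i₀ ^ (a - 1) * pderiv l (E i₀)) * Q := by
      have h2 := (hder ▸ hPa_dvd l).sub (Dvd.dvd.mul_right (dvd_refl (E i₀ ^ a)) (pderiv l Q))
      rwa [add_sub_cancel_right] at h2
    have h3 : E i₀ ^ (a - 1) * E i₀ ∣
        E i₀ ^ (a - 1) * ((a : MvPolynomial (Fin 3) k) * pderiv l (E i₀) * Q) := by
      have e4 : ((a : MvPolynomial (Fin 3) k) * E i₀ ^ (a - 1) * pderiv l (E i₀)) * Q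
          = E i₀ ^ (a - 1) * ((a : MvPolynomial (Fin 3) k) * pderiv l (E i₀) * Q) := by ring
      rw [← e4, hpowsucc]
      exact h1
    have h5 : E i₀ ∣ (a : MvPolynomial (Fin 3) k) * pderiv l (E i₀) * Q :=
      (mul_dvd_mul_iff_left (pow_ne_zero (a - 1) hP0)).mp h3
    have hane : ((a : k)) ≠ 0 := Nat.cast_ne_zero.mpr (hpos i₀).ne'
    have hCa : IsUnit ((a : MvPolynomial (Fin 3) k)) := by
      rw [← MvPolynomial.C_eq_coe_nat]
      exact (isUnit_iff_ne_zero.mpr hane).map (C : k →+* MvPolynomial (Fin 3) k)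
    rcases hPprime.dvd_or_dvd h5 with h6 | h6
    · rcases hPprime.dvd_or_dvd h6 with h7 | h7
      · exact absurd (isUnit_of_dvd_unit h7 hCa) (hirr i₀).not_isUnit
      · exact h7
    · exact absurd h6 hPnotQ
  have hzero : ∀ l : Fin 3, pderiv l (E i₀) = 0 := fun l =>
    pderiv_eq_zero_of_dvd hP0 l (hPdP l)
  have hPC := eq_C_of_pderiv_eq_zero' hzero
  by_cases hc0 : coeff 0 (E i₀) = 0
  · rw [hc0, map_zero] at hPC
    exact hP0 hPC
  · exact (hirr i₀).not_isUnit
      (hPC ▸ (isUnit_iff_ne_zero.mpr hc0).map (C : k →+* MvPolynomial (Fin 3) k))
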